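/- Let X be a Hilbert space and f : X → (-∞, ∞] proper and weakly lower semicontinuous, x̄ ∈ dom(f). Suppose there exist r > 0, η > 0 and a desingularizing function φ ∈ C[0,η) ∩ C¹(0,η), φ(0) = 0, φ concave, φ' > 0, such that φ'(f(x) - f(x̄)) · d(0, ∂̂f(x)) ≥ 1 for all x ∈ B_r(x̄) with f(x̄) < f(x) < f(x̄) + η. Then there exist 0 < r̃ ≤ r and 0 < η̃ ≤ η such that d(x, S) ≤ 2 φ(f(x) - f(x̄)) for all x ∈ B_{r̃}(x̄) with f(x̄) ≤ f(x) < f(x̄) + η̃, where S = {x : f(x) ≤ f(x̄)}. -/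

import Mathlib

open Metric Set Filter

/-- The Fréchet subdifferential of a proper `EReal`-valued function. -/
def FrechetSubdiff {X : Type*} [NormedAddCommGroup X] [InnerProductSpace ℝ X]
    (g : X → EReal) (x : X) : Set X :=
  {ξ | g x ≠ ⊤ ∧ ∀ ε : ℝ, 0 < ε → ∀ᶠ y in nhdsWithin x {x}ᶜ,
    g x + (((inner ℝ ξ (y - x) : ℝ) - ε * ‖y - x‖ : ℝ) : EReal) ≤ g y}

local notation "⟪" x ", " y "⟫" => @inner ℝ _ _ x y

def SeqLSCa {X : Type*} [NormedAddCommGroup X] (h : X → ℝ) : Prop :=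
  ∀ (y : X) (u : ℕ → X), Tendsto u atTop (nhds y) → ∀ b : ℝ,
    (∀ᶠ n in atTop, h (u n) ≤ b) → h y ≤ b

lemma approx_min_on {X : Type*} (g : X → ℝ) (s : Set X) (hs : s.Nonempty) (b : ℝ)
    (hb : ∀ y ∈ s, b ≤ g y) {ε : ℝ} (hε : 0 < ε) :
    ∃ m ∈ s, ∀ y ∈ s, g m ≤ g y + ε := by
  obtain ⟨a, ⟨m, hm, rfl⟩, ha⟩ := Real.lt_sInf_add_pos (hs.image g) hε
  refine ⟨m, hm, fun y hy => ?_⟩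
  have h1 : sInf (g '' s) ≤ g y := csInf_le ⟨b, fun a ⟨w, hw, hwa⟩ => hwa ▸ hb w hw⟩ ⟨y, hy, rfl⟩
  linarith

lemma approx_min {X : Type*} [Nonempty X] (g : X → ℝ) (b : ℝ) (hb : ∀ y, b ≤ g y)
    {ε : ℝ} (hε : 0 < ε) : ∃ m, ∀ y, g m ≤ g y + ε := by
  obtain ⟨m, _, hm⟩ := approx_min_on g Set.univ ⟨Classical.arbitrary X, trivial⟩ b
    (fun y _ => hb y) hε
  exact ⟨m, fun y => hm y trivial⟩

lemma ekeland_vp {X : Type*} [NormedAddCommGroup X] [CompleteSpace X]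
    (h : X → ℝ) (hb : ∀ y, 0 ≤ h y) (hlsc : SeqLSCa h) (x : X)
    {κ : ℝ} (hκ : 0 < κ) :
    ∃ z, h z ≤ h x ∧ κ * ‖z - x‖ ≤ h x - h z ∧ ∀ y, h z ≤ h y + κ * ‖y - z‖ := by
  classical
  set P : X → X → Prop := fun a c => h a + κ * dist a c ≤ h c with hP
  have Prefl : ∀ a, P a a := by intro a; simp [hP]
  have Ptrans : ∀ a c d, P a c → P c d → P a d := by
    intro a c d h1 h2
    have tri := dist_triangle a c d
    have : κ * dist a d ≤ κ * dist a c + κ * dist c d := by nlinarith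
    simp only [hP] at h1 h2 ⊢
    linarith
  have hpick : ∀ (n : ℕ) (w : X), ∃ m, P m w ∧ ∀ y, P y w → h m ≤ h y + (1/2)^n := by
    intro n w
    obtain ⟨m, hm1, hm2⟩ := approx_min_on h {y | P y w} ⟨w, Prefl w⟩ 0
      (fun y _ => hb y) (by positivity : (0:ℝ) < (1/2)^n)
    exact ⟨m, hm1, fun y hy => hm2 y hy⟩
  set pick : ℕ → X → X := fun n w => Classical.choose (hpick n w) with hpickdef
  have pickspec : ∀ n w, P (pick n w) w ∧ ∀ y, P y w → h (pick n w) ≤ h y + (1/2)^n :=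
    fun n w => Classical.choose_spec (hpick n w)
  set zs : ℕ → X := fun n => Nat.rec x (fun n w => pick n w) n with hzs
  have hzs0 : zs 0 = x := rfl
  have hzsS : ∀ n, zs (n+1) = pick n (zs n) := fun n => rfl
  have hstep : ∀ n, P (zs (n+1)) (zs n) := fun n => (pickspec n (zs n)).1
  have hstep2 : ∀ n y, P y (zs n) → h (zs (n+1)) ≤ h y + (1/2)^n :=
    fun n y hy => (pickspec n (zs n)).2 y hy
  have hdec : ∀ n, h (zs (n+1)) ≤ h (zs n) := by
    intro n
    have := hstep n
    have hd : 0 ≤ κ * dist (zs (n+1)) (zs n) := by positivity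
    simp only [hP] at this; linarith
  have hanti : Antitone (fun n => h (zs n)) := antitone_nat_of_succ_le hdec
  have hPmn : ∀ n m, n ≤ m → P (zs m) (zs n) := by
    intro n m hnm
    induction m, hnm using Nat.le_induction with
    | base => exact Prefl _
    | succ m hnm ih => exact Ptrans _ _ _ (hstep m) ih
  -- Cauchy
  have hbdd : BddBelow (Set.range fun n => h (zs n)) := ⟨0, fun a ⟨n, hn⟩ => hn ▸ hb _⟩
  set l := ⨅ n, h (zs n) with hl
  have hlle : ∀ n, l ≤ h (zs n) := fun n => ciInf_le hbdd n
  have hcauchy : CauchySeq zs := by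
    rw [Metric.cauchySeq_iff']
    intro ε hε
    have : l < l + κ * ε := by nlinarith
    obtain ⟨N, hN⟩ := exists_lt_of_ciInf_lt this
    refine ⟨N, fun n hn => ?_⟩
    have hd := hPmn N n hn
    simp only [hP] at hd
    have h1 : κ * dist (zs n) (zs N) ≤ h (zs N) - h (zs n) := by linarith
    have h2 : h (zs N) - h (zs n) < κ * ε := by have := hlle n; linarith
    have := lt_of_le_of_lt h1 h2
    exact lt_of_mul_lt_mul_left (by linarith) hκ.le
  obtain ⟨zbar, hzbar⟩ := cauchySeq_tendsto_of_complete hcauchy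
  have hhz : ∀ n, h zbar ≤ h (zs n) := by
    intro n
    refine hlsc zbar zs hzbar (h (zs n)) ?_
    filter_upwards [eventually_ge_atTop n] with m hm
    exact hanti hm
  have hPz : ∀ n, P zbar (zs n) := by
    intro n
    have htd : Tendsto (fun m => κ * dist (zs m) (zs n)) atTop
        (nhds (κ * dist zbar (zs n))) :=
      tendsto_const_nhds.mul (hzbar.dist tendsto_const_nhds)
    have hle : κ * dist zbar (zs n) ≤ h (zs n) - h zbar := by
      refine le_of_tendsto htd ?_
      filter_upwards [eventually_ge_atTop n] with m hm
      have hd := hPmn n m hm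
      simp only [hP] at hd
      have := hhz m
      linarith
    simp only [hP]; linarith
  refine ⟨zbar, by simpa [hzs0] using hhz 0, ?_, ?_⟩
  · have := hPz 0
    simp only [hP, hzs0] at this
    rw [← dist_eq_norm]
    linarith
  · intro y
    by_contra hcon
    push_neg at hcon
    have hy : P y zbar := by
      simp only [hP]
      rw [dist_eq_norm] at *
      linarith
    have hyn : ∀ n, h zbar ≤ h y + (1/2)^n := by
      intro n
      have := hstep2 n y (Ptrans y zbar (zs n) hy (hPz n))
      linarith [hhz (n+1)]
    have hle : h zbar ≤ h y := by
      refine le_of_forall_pos_le_add fun ε hε => ?_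
      obtain ⟨n, hn⟩ := exists_pow_lt_of_lt_one hε (by norm_num : (1:ℝ)/2 < 1)
      linarith [hyn n]
    have hd : 0 ≤ κ * ‖y - zbar‖ := by positivity
    linarith

lemma sq_le_imp_le {a b : ℝ} (hb : 0 ≤ b) (h : a^2 ≤ b^2) : a ≤ b := by
  nlinarith [sq_nonneg (a - b), sq_nonneg (a + b)]

set_option maxHeartbeats 4000000 in
lemma smoothVP {X : Type*} [NormedAddCommGroup X] [InnerProductSpace ℝ X] [CompleteSpace X]
    (h : X → ℝ) (hpos : ∀ y, 0 ≤ h y) (hlsc : SeqLSCa h) (z : X)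
    {α ρ γ : ℝ} (hα : 0 < α) (hρ : 0 < ρ) (hγ : 0 < γ)
    (hslope : ∀ y, h z ≤ h y + α * ‖y - z‖) :
    ∃ v ξ, ‖v - z‖ ≤ ρ ∧ h v ≤ h z + γ ∧ ‖ξ‖ ≤ α + γ ∧
      ∀ ε : ℝ, 0 < ε → ∀ᶠ y in nhds v,
        h v + (inner ℝ ξ (y - v) : ℝ) - ε * ‖y - v‖ ≤ h y := by
  classical
  have hne : Nonempty X := ⟨z⟩
  obtain ⟨κ, hκval⟩ : ∃ κ : ℝ, κ = 1/4 := ⟨_, rfl⟩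
  have hκpos : 0 < κ := by rw [hκval]; norm_num
  have hκlt : κ < 1 := by rw [hκval]; norm_num
  obtain ⟨δ0, hδ0def⟩ : ∃ d : ℝ, d = min (γ*ρ/(24*α)) (γ/(28*α)) := ⟨_, rfl⟩
  have hδ0 : 0 < δ0 := by rw [hδ0def]; exact lt_min (by positivity) (by positivity)
  have hδ0a : δ0 ≤ γ*ρ/(24*α) := hδ0def ▸ min_le_left _ _
  have hδ0b : δ0 ≤ γ/(28*α) := hδ0def ▸ min_le_right _ _
  obtain ⟨σ, hσdef⟩ : ∃ s : ℝ, s = γ/(6*ρ) := ⟨_, rfl⟩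
  have hσ : 0 < σ := by rw [hσdef]; positivity
  obtain ⟨lam, hlamdef⟩ : ∃ l : ℝ, l = Real.sqrt (4*α*δ0/σ) := ⟨_, rfl⟩
  have h4αδ : 0 < 4*α*δ0/σ := div_pos (by nlinarith) hσ
  have hlam : 0 < lam := by rw [hlamdef]; exact Real.sqrt_pos.2 h4αδ
  have hlamsq : σ * lam^2 = 4*α*δ0 := by
    rw [hlamdef, Real.sq_sqrt h4αδ.le]
    field_simp
  have hlamρ : lam ≤ ρ := by
    have e2 : ρ^2 * (γ/(6*ρ)) = γ*ρ/6 := by field_simp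
    have h1 : 4*α*δ0/σ ≤ ρ^2 := by
      rw [div_le_iff₀ hσ, hσdef, e2]
      have h2 : 4*α*δ0 ≤ 4*α*(γ*ρ/(24*α)) := by nlinarith
      have e1 : (4:ℝ)*α*(γ*ρ/(24*α)) = γ*ρ/6 := by field_simp; ring
      linarith
    calc lam = Real.sqrt (4*α*δ0/σ) := hlamdef
      _ ≤ Real.sqrt (ρ^2) := Real.sqrt_le_sqrt h1
      _ = ρ := Real.sqrt_sq hρ.le
  -- the smooth penalty Θ and F = h + Θ
  obtain ⟨Θ, hΘdef⟩ : ∃ T : X → ℝ, T = fun y => α * Real.sqrt (δ0^2 + ‖y - z‖^2) := ⟨_, rfl⟩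
  have hΘapp : ∀ y, Θ y = α * Real.sqrt (δ0^2 + ‖y - z‖^2) := fun y => by rw [hΘdef]
  have hsqrtge : ∀ y : X, ‖y - z‖ ≤ Real.sqrt (δ0^2 + ‖y - z‖^2) := fun y =>
    Real.le_sqrt_of_sq_le (by nlinarith [sq_nonneg δ0])
  have hΘge : ∀ y, α * ‖y - z‖ ≤ Θ y := fun y => by
    rw [hΘapp]; exact mul_le_mul_of_nonneg_left (hsqrtge y) hα.le
  have hΘgeδ : ∀ y, α * δ0 ≤ Θ y := by
    intro y
    rw [hΘapp]
    exact mul_le_mul_of_nonneg_left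
      (Real.le_sqrt_of_sq_le (by nlinarith [sq_nonneg ‖y - z‖])) hα.le
  have hΘz : Θ z = α * δ0 := by
    rw [hΘapp]
    rw [show δ0^2 + ‖z - z‖^2 = δ0^2 by simp, Real.sqrt_sq hδ0.le]
  have hΘcont : Continuous Θ := by
    rw [hΘdef]
    exact continuous_const.mul (Real.continuous_sqrt.comp (continuous_const.add
      (((continuous_id.sub continuous_const).norm).pow 2)))
  obtain ⟨F, hFdef⟩ : ∃ F : X → ℝ, F = fun y => h y + Θ y := ⟨_, rfl⟩
  have hFapp : ∀ y, F y = h y + Θ y := fun y => by rw [hFdef]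
  have hFge : ∀ y, h z ≤ F y := fun y => by
    rw [hFapp]; have := hΘge y; have := hslope y; linarith
  have hFz : F z = h z + α * δ0 := by rw [hFapp, hΘz]
  -- weights and tolerances
  obtain ⟨t, htdef⟩ : ∃ t : ℕ → ℝ, t = fun i => σ * κ^i := ⟨_, rfl⟩
  have htapp : ∀ i, t i = σ * κ^i := fun i => by rw [htdef]
  have ht : ∀ i, 0 < t i := fun i => by rw [htapp]; exact mul_pos hσ (pow_pos hκpos i)
  obtain ⟨eb, hebdef⟩ : ∃ e : ℝ, e = α * δ0 := ⟨_, rfl⟩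
  have heb : 0 < eb := by rw [hebdef]; exact mul_pos hα hδ0
  obtain ⟨en, hendef⟩ : ∃ e : ℕ → ℝ, e = fun n => eb * κ^(3*n) := ⟨_, rfl⟩
  have henapp : ∀ n, en n = eb * κ^(3*n) := fun n => by rw [hendef]
  have hen : ∀ n, 0 < en n := fun n => by rw [henapp]; exact mul_pos heb (pow_pos hκpos _)
  have henle : ∀ n, en n ≤ eb := by
    intro n
    rw [henapp]
    have h1 : κ^(3*n) ≤ 1 := pow_le_one₀ hκpos.le hκlt.le
    nlinarith
  obtain ⟨A, hAdef⟩ : ∃ A : ℕ → ℝ, A = fun n => ∑ i ∈ Finset.range (n+1), t i := ⟨_, rfl⟩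
  have hAapp : ∀ n, A n = ∑ i ∈ Finset.range (n+1), t i := fun n => by rw [hAdef]
  have hgeo : ∀ m : ℕ, ∑ i ∈ Finset.range m, κ ^ i ≤ 4/3 := by
    intro m
    rw [geom_sum_eq (by rw [hκval]; norm_num) m]
    have h1 : (0:ℝ) ≤ κ^m := by positivity
    rw [hκval] at *
    rw [div_le_iff_of_neg (by norm_num : (1:ℝ)/4 - 1 < 0)]
    nlinarith
  have hA1 : ∀ n, σ ≤ A n := by
    intro n
    have h0 : t 0 = σ := by rw [htapp]; simp
    rw [hAapp]
    calc σ = t 0 := h0.symm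
      _ ≤ ∑ i ∈ Finset.range (n+1), t i :=
        Finset.single_le_sum (fun i _ => (ht i).le) (Finset.mem_range.2 (Nat.succ_pos n))
  obtain ⟨Ainf, hAinfdef⟩ : ∃ a : ℝ, a = σ * (4/3) := ⟨_, rfl⟩
  have hAinfpos : 0 < Ainf := by rw [hAinfdef]; nlinarith
  have hAle : ∀ n, A n ≤ Ainf := by
    intro n
    have e1 : A n = σ * ∑ i ∈ Finset.range (n+1), κ ^ i := by
      rw [hAapp, Finset.mul_sum]
      exact Finset.sum_congr rfl fun i _ => htapp i
    rw [e1, hAinfdef]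
    exact mul_le_mul_of_nonneg_left (hgeo (n+1)) hσ.le
  have hAtend : Tendsto A atTop (nhds Ainf) := by
    have hs : HasSum (fun i => σ * κ^i) (σ * (1 - κ)⁻¹) :=
      (hasSum_geometric_of_lt_one hκpos.le hκlt).mul_left σ
    have hs' : HasSum t (σ * (1 - κ)⁻¹) := by rw [htdef]; exact hs
    have h2 : Tendsto (fun n => ∑ i ∈ Finset.range n, t i) atTop (nhds (σ * (1-κ)⁻¹)) :=
      hs'.tendsto_sum_nat
    have h3 : σ * (1-κ)⁻¹ = Ainf := by rw [hAinfdef, hκval]; norm_num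
    rw [← h3, hAdef]
    exact h2.comp (tendsto_add_atTop_nat 1)
  -- penalized functions and the recursive construction
  obtain ⟨q, hqdef⟩ : ∃ q : ℕ → X → X → ℝ,
      q = fun n w y => F y + A n * ‖y‖^2 - 2 * ⟪y, w⟫ := ⟨_, rfl⟩
  have hqapp : ∀ n w y, q n w y = F y + A n * ‖y‖^2 - 2 * ⟪y, w⟫ := fun n w y => by rw [hqdef]
  have hpick : ∀ n w, ∃ m, ∀ y, q n w m ≤ q n w y + en n := by
    intro n w
    have hqlb : ∀ y, h z - ‖w‖^2/σ ≤ q n w y := by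
      intro y
      have h1 := hFge y
      have h2 : (⟪y, w⟫ : ℝ) ≤ ‖y‖ * ‖w‖ := real_inner_le_norm y w
      have h3 : σ ≤ A n := hA1 n
      have key : -(‖w‖^2/σ) ≤ σ * ‖y‖^2 - 2*(‖y‖*‖w‖) := by
        have hsq := sq_nonneg (σ*‖y‖ - ‖w‖)
        have hw : ‖w‖^2/σ * σ = ‖w‖^2 := div_mul_cancel₀ _ hσ.ne'
        nlinarith [hσ]
      have h4 : σ * ‖y‖^2 ≤ A n * ‖y‖^2 := by nlinarith [sq_nonneg ‖y‖]
      have h2' := mul_le_mul_of_nonneg_left h2 (by norm_num : (0:ℝ) ≤ 2)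
      rw [hqapp]
      linarith
    exact approx_min (q n w) _ hqlb (hen n)
  set pick : ℕ → X → X := fun n w => Classical.choose (hpick n w) with hpickdef
  have pickspec : ∀ n w y, q n w (pick n w) ≤ q n w y + en n :=
    fun n w => Classical.choose_spec (hpick n w)
  set st : ℕ → X × X := fun n => Nat.rec (z, t 0 • z)
      (fun n p => (pick n p.2, p.2 + t (n+1) • pick n p.2)) n with hstdef
  set xs : ℕ → X := fun n => (st n).1 with hxsdef
  set W : ℕ → X := fun n => (st n).2 with hWdef
  have hxs0 : xs 0 = z := rfl
  have hxsS : ∀ n, xs (n+1) = pick n (W n) := fun n => rfl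
  have hWS : ∀ n, W (n+1) = W n + t (n+1) • xs (n+1) := fun n => rfl
  have hW : ∀ n, W n = ∑ i ∈ Finset.range (n+1), t i • xs i := by
    intro n
    induction n with
    | zero => rw [Finset.sum_range_one]; rfl
    | succ n ih => rw [hWS, ih]; exact (Finset.sum_range_succ _ _).symm
  obtain ⟨P, hPdef⟩ : ∃ P : ℕ → X → ℝ,
      P = fun n y => ∑ i ∈ Finset.range (n+1), t i * ‖y - xs i‖^2 := ⟨_, rfl⟩
  have hPapp : ∀ n y, P n y = ∑ i ∈ Finset.range (n+1), t i * ‖y - xs i‖^2 :=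
    fun n y => by rw [hPdef]
  have hPident : ∀ n y u, P n y - P n u
      = A n * (‖y‖^2 - ‖u‖^2) - 2 * ⟪y - u, W n⟫ := by
    intro n y u
    have expand : ∀ i ∈ Finset.range (n+1),
        t i * ‖y - xs i‖^2 - t i * ‖u - xs i‖^2
        = t i * (‖y‖^2 - ‖u‖^2) - 2 * (t i * ⟪y - u, xs i⟫) := by
      intro i _
      have h1 := norm_sub_sq_real y (xs i)
      have h2 := norm_sub_sq_real u (xs i)
      have h3 : (⟪y - u, xs i⟫ : ℝ) = ⟪y, xs i⟫ - ⟪u, xs i⟫ := inner_sub_left _ _ _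
      rw [h1, h2, h3]; ring
    have hinner : (⟪y - u, W n⟫ : ℝ) = ∑ i ∈ Finset.range (n+1), t i * ⟪y - u, xs i⟫ := by
      rw [hW n, inner_sum]
      exact Finset.sum_congr rfl fun i _ => real_inner_smul_right _ _ _
    calc P n y - P n u
        = ∑ i ∈ Finset.range (n+1), (t i * ‖y - xs i‖^2 - t i * ‖u - xs i‖^2) := by
          rw [hPapp, hPapp, Finset.sum_sub_distrib]
      _ = ∑ i ∈ Finset.range (n+1), (t i * (‖y‖^2 - ‖u‖^2) - 2 * (t i * ⟪y - u, xs i⟫)) :=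
          Finset.sum_congr rfl expand
      _ = A n * (‖y‖^2 - ‖u‖^2) - 2 * ⟪y - u, W n⟫ := by
          rw [hinner, hAapp, Finset.mul_sum, Finset.sum_sub_distrib, ← Finset.sum_mul]
  have Qspec : ∀ n y, F (xs (n+1)) + P n (xs (n+1)) ≤ F y + P n y + en n := by
    intro n y
    have hq := pickspec n (W n) y
    rw [← hxsS n, hqapp, hqapp] at hq
    have hid := hPident n (xs (n+1)) y
    have h3 : (⟪xs (n+1) - y, W n⟫ : ℝ) = ⟪xs (n+1), W n⟫ - ⟪y, W n⟫ := inner_sub_left _ _ _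
    rw [h3] at hid
    linarith
  have hP0 : ∀ n y, σ * ‖y - z‖^2 ≤ P n y := by
    intro n y
    have h0 : t 0 * ‖y - xs 0‖^2 = σ * ‖y - z‖^2 := by
      rw [hxs0, htapp]; simp
    rw [hPapp]
    calc σ * ‖y - z‖^2 = t 0 * ‖y - xs 0‖^2 := h0.symm
      _ ≤ ∑ i ∈ Finset.range (n+1), t i * ‖y - xs i‖^2 :=
        Finset.single_le_sum (f := fun i => t i * ‖y - xs i‖^2)
          (fun i _ => mul_nonneg (ht i).le (sq_nonneg _)) (Finset.mem_range.2 (Nat.succ_pos n))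
  -- radius bound
  have Rad : ∀ n, ‖xs n - z‖ ≤ lam := by
    intro n
    induction n using Nat.strong_induction_on with
    | _ n ih =>
      match n with
      | 0 => rw [hxs0]; simp only [sub_self, norm_zero]; exact hlam.le
      | (m+1) =>
        have hq := Qspec m z
        have h1 : σ * ‖xs (m+1) - z‖^2 ≤ P m (xs (m+1)) := hP0 m _
        have h2 : P m z ≤ σ * lam^2 * (1/3) := by
          have hsum : P m z = ∑ i ∈ Finset.range m, t (i+1) * ‖z - xs (i+1)‖^2 := by
            rw [hPapp, Finset.sum_range_succ', hxs0]
            simp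
          rw [hsum]
          have hterm : ∀ i ∈ Finset.range m,
              t (i+1) * ‖z - xs (i+1)‖^2 ≤ (σ * lam^2) * (κ * κ^i) := by
            intro i hi
            have hri : ‖xs (i+1) - z‖ ≤ lam := ih (i+1) (by
              simp only [Finset.mem_range] at hi; omega)
            rw [norm_sub_rev]
            have h5 : ‖xs (i+1) - z‖^2 ≤ lam^2 := by nlinarith [norm_nonneg (xs (i+1) - z)]
            have h6 : t (i+1) = σ * (κ * κ^i) := by rw [htapp]; ring
            rw [h6]
            have h7 : σ*(κ*κ^i)*‖xs (i+1) - z‖^2 ≤ σ*(κ*κ^i)*lam^2 :=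
              mul_le_mul_of_nonneg_left h5
                (by positivity)
            rw [show σ*lam^2*(κ*κ^i) = σ*(κ*κ^i)*lam^2 from by ring]
            exact h7
          calc ∑ i ∈ Finset.range m, t (i+1) * ‖z - xs (i+1)‖^2
              ≤ ∑ i ∈ Finset.range m, (σ * lam^2) * (κ * κ^i) := Finset.sum_le_sum hterm
            _ = (σ * lam^2 * κ) * ∑ i ∈ Finset.range m, κ^i := by
                rw [Finset.mul_sum]; exact Finset.sum_congr rfl fun i _ => by ring
            _ ≤ (σ * lam^2 * κ) * (4/3) := by
                apply mul_le_mul_of_nonneg_left (hgeo m)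
                have : 0 < σ * lam^2 * κ := by positivity
                linarith
            _ = σ * lam^2 * (1/3) := by rw [hκval]; ring
        have h4 : h z ≤ F (xs (m+1)) := hFge _
        have h5 : en m ≤ eb := henle m
        have key : σ * ‖xs (m+1) - z‖^2 ≤ σ * lam^2 := by
          have hq' : σ * ‖xs (m+1) - z‖^2 ≤ α*δ0 + σ*lam^2*(1/3) + eb := by
            rw [hFz] at hq; linarith
          rw [hlamsq] at hq' ⊢
          rw [hebdef] at hq'
          linarith
        have hfin : ‖xs (m+1) - z‖^2 ≤ lam^2 := by nlinarith [key, hσ]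
        exact sq_le_imp_le hlam.le hfin
  -- Cauchy property of xs
  have hstep2 : ∀ m, t (m+1) * ‖xs (m+2) - xs (m+1)‖^2 ≤ en m + en (m+1) := by
    intro m
    have hq1 := Qspec (m+1) (xs (m+1))
    have hq2 := Qspec m (xs (m+2))
    have e1 : P (m+1) (xs (m+2)) = P m (xs (m+2)) + t (m+1) * ‖xs (m+2) - xs (m+1)‖^2 := by
      rw [hPapp, hPapp]; exact Finset.sum_range_succ _ _
    have e2 : P (m+1) (xs (m+1)) = P m (xs (m+1)) := by
      rw [hPapp, hPapp, Finset.sum_range_succ]; simp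
    linarith
  obtain ⟨c2, hc2def⟩ : ∃ c : ℝ, c = Real.sqrt (2*eb/(σ*κ^3)) := ⟨_, rfl⟩
  have hc2pos : 0 < c2 := by
    rw [hc2def]
    exact Real.sqrt_pos.2 (div_pos (by nlinarith) (by positivity))
  have hc2sq : c2^2 = 2*eb/(σ*κ^3) := by
    rw [hc2def]; exact Real.sq_sqrt (le_of_lt (div_pos (by nlinarith) (by positivity)))
  have hdistb : ∀ m, dist (xs (m+1)) (xs (m+2)) ≤ c2 * κ^(m+1) := by
    intro m
    have h1 := hstep2 m
    have htpos := ht (m+1)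
    have e3 : (c2*κ^(m+1))^2 * t (m+1) = 2*eb*κ^(3*m) := by
      rw [mul_pow, hc2sq, htapp]
      field_simp
      ring
    have e4 : en m + en (m+1) ≤ 2*eb*κ^(3*m) := by
      rw [henapp, henapp]
      have h2 : κ^(3*(m+1)) ≤ κ^(3*m) :=
        pow_le_pow_of_le_one hκpos.le hκlt.le (by omega)
      nlinarith [heb]
    have hsq : ‖xs (m+2) - xs (m+1)‖^2 ≤ (c2 * κ^(m+1))^2 := by
      nlinarith [h1, e3, e4, htpos]
    rw [dist_eq_norm, norm_sub_rev]
    exact sq_le_imp_le (by positivity) hsq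
  have hcauchy : CauchySeq xs := by
    apply cauchySeq_of_le_geometric κ (lam + c2) hκlt
    intro n
    match n with
    | 0 =>
      show dist (xs 0) (xs 1) ≤ (lam + c2) * κ ^ 0
      have e : dist (xs 0) (xs 1) = ‖xs 1 - z‖ := by
        rw [hxs0, dist_eq_norm, norm_sub_rev]
      rw [e, pow_zero, mul_one]
      have := Rad 1
      linarith
    | (m+1) =>
      show dist (xs (m+1)) (xs (m+2)) ≤ (lam + c2) * κ ^ (m+1)
      have := hdistb m
      have h2 : c2 * κ^(m+1) ≤ (lam + c2) * κ^(m+1) := by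
        have h3 : 0 ≤ κ^(m+1) := pow_nonneg hκpos.le _
        nlinarith [hlam]
      linarith
  -- Cauchy property of W
  have hWcauchy : CauchySeq W := by
    apply cauchySeq_of_le_geometric κ (σ*κ*(‖z‖+lam)) hκlt
    intro n
    have e : dist (W n) (W (n+1)) = t (n+1) * ‖xs (n+1)‖ := by
      rw [hWS, dist_eq_norm]
      have : W n - (W n + t (n+1) • xs (n+1)) = -(t (n+1) • xs (n+1)) := by abel
      rw [this, norm_neg, norm_smul, Real.norm_eq_abs, abs_of_pos (ht (n+1))]
    rw [e, htapp]
    have hxb : ‖xs (n+1)‖ ≤ ‖z‖ + lam := by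
      have h1 := Rad (n+1)
      calc ‖xs (n+1)‖ = ‖(xs (n+1) - z) + z‖ := by rw [sub_add_cancel]
        _ ≤ ‖xs (n+1) - z‖ + ‖z‖ := norm_add_le _ _
        _ ≤ ‖z‖ + lam := by linarith
    have e2 : σ*κ^(n+1) = (σ*κ)*κ^n := by rw [pow_succ]; ring
    rw [e2]
    calc (σ*κ)*κ^n*‖xs (n+1)‖ ≤ (σ*κ)*κ^n*(‖z‖+lam) :=
          mul_le_mul_of_nonneg_left hxb
            (mul_nonneg (mul_nonneg hσ.le hκpos.le) (pow_nonneg hκpos.le n))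
      _ = σ*κ*(‖z‖+lam)*κ^n := by ring
  obtain ⟨v, hv⟩ := cauchySeq_tendsto_of_complete hcauchy
  obtain ⟨winf, hwinf⟩ := cauchySeq_tendsto_of_complete hWcauchy
  have hvz : ‖v - z‖ ≤ lam :=
    le_of_tendsto ((hv.sub tendsto_const_nhds).norm) (Eventually.of_forall Rad)
  -- the limit minimality property
  have hmin : ∀ y, h v + Θ v ≤ h y + Θ y + 2*⟪Ainf•v - winf, y - v⟫ + Ainf*‖y - v‖^2 := by
    intro y
    have hid2 : Ainf*(‖y‖^2-‖v‖^2) - 2*⟪y-v, winf⟫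
        = 2*⟪Ainf•v - winf, y-v⟫ + Ainf*‖y-v‖^2 := by
      have e1 : ‖y-v‖^2 = ‖y‖^2 - 2*⟪y,v⟫ + ‖v‖^2 := norm_sub_sq_real y v
      have e2a : (⟪Ainf•v - winf, y-v⟫:ℝ) = Ainf * ⟪v, y - v⟫ - ⟪winf, y - v⟫ := by
        rw [inner_sub_left, real_inner_smul_left]
      have e2b : (⟪v, y-v⟫:ℝ) = ⟪v,y⟫ - ⟪v,v⟫ := inner_sub_right _ _ _
      have e2c : (⟪winf, y-v⟫:ℝ) = ⟪winf,y⟫ - ⟪winf,v⟫ := inner_sub_right _ _ _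
      have e3 : (⟪y-v,winf⟫:ℝ) = ⟪y,winf⟫ - ⟪v,winf⟫ := inner_sub_left _ _ _
      have e4 : (⟪v,v⟫:ℝ) = ‖v‖^2 := real_inner_self_eq_norm_sq v
      have e5 : (⟪y,winf⟫:ℝ) = ⟪winf,y⟫ := real_inner_comm _ _
      have e6 : (⟪v,winf⟫:ℝ) = ⟪winf,v⟫ := real_inner_comm _ _
      have e7 : (⟪y,v⟫:ℝ) = ⟪v,y⟫ := real_inner_comm _ _
      rw [e2a, e2b, e2c, e3, e1, e4, e5, e6, e7]; ring
    have hstep : ∀ β : ℝ, 0 < β →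
        h v ≤ (h y + Θ y + 2*⟪Ainf•v - winf, y - v⟫ + Ainf*‖y - v‖^2) - Θ v + β := by
      intro β hβ
      refine hlsc v (fun n => xs (n+1)) (hv.comp (tendsto_add_atTop_nat 1)) _ ?_
      have hGbound : ∀ n, h (xs (n+1)) ≤ (F y + A n * (‖y‖^2 - ‖xs (n+1)‖^2)
          - 2*⟪y - xs (n+1), W n⟫ + en n) - Θ (xs (n+1)) := by
        intro n
        have hq1 := Qspec n y
        have hid := hPident n y (xs (n+1))
        have hFx : F (xs (n+1)) = h (xs (n+1)) + Θ (xs (n+1)) := hFapp _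
        linarith
      have hxv : Tendsto (fun n => xs (n+1)) atTop (nhds v) :=
        hv.comp (tendsto_add_atTop_nat 1)
      have hWv : Tendsto (fun n => W n) atTop (nhds winf) := hwinf
      have htendG : Tendsto (fun n => (F y + A n * (‖y‖^2 - ‖xs (n+1)‖^2)
          - 2*⟪y - xs (n+1), W n⟫ + en n) - Θ (xs (n+1))) atTop
          (nhds ((F y + Ainf * (‖y‖^2 - ‖v‖^2) - 2*⟪y - v, winf⟫ + 0) - Θ v)) := by
        have t1 : Tendsto (fun n => A n * (‖y‖^2 - ‖xs (n+1)‖^2)) atTop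
            (nhds (Ainf * (‖y‖^2 - ‖v‖^2))) :=
          hAtend.mul (tendsto_const_nhds.sub ((hxv.norm).pow 2))
        have t2 : Tendsto (fun n => (⟪y - xs (n+1), W n⟫ : ℝ)) atTop
            (nhds (⟪y - v, winf⟫ : ℝ)) :=
          Filter.Tendsto.inner (tendsto_const_nhds.sub hxv) hWv
        have t3 : Tendsto en atTop (nhds 0) := by
          rw [hendef]
          have : (fun n => eb * κ^(3*n)) = fun n => eb * (κ^3)^n := by
            funext n; rw [← pow_mul]
          rw [this]
          have h0 : Tendsto (fun n => (κ^3)^n) atTop (nhds 0) :=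
            tendsto_pow_atTop_nhds_zero_of_lt_one (pow_nonneg hκpos.le 3)
              (pow_lt_one₀ hκpos.le hκlt (by norm_num))
          simpa using h0.const_mul eb
        have t4 : Tendsto (fun n => Θ (xs (n+1))) atTop (nhds (Θ v)) :=
          (hΘcont.tendsto v).comp hxv
        exact (((tendsto_const_nhds.add t1).sub (t2.const_mul 2)).add t3).sub t4
      have hLlt : (F y + Ainf * (‖y‖^2 - ‖v‖^2) - 2*⟪y - v, winf⟫ + 0) - Θ v
          < (h y + Θ y + 2*⟪Ainf•v - winf, y - v⟫ + Ainf*‖y - v‖^2) - Θ v + β := by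
        rw [hFapp]
        linarith [hid2]
      filter_upwards [htendG.eventually_le_const hLlt] with n hn
      exact le_trans (hGbound n) hn
    have := le_of_forall_pos_le_add hstep
    linarith
  -- derivative of Θ at v
  obtain ⟨cθ, hcθdef⟩ : ∃ c : ℝ, c = Real.sqrt (δ0^2 + ‖v - z‖^2) := ⟨_, rfl⟩
  have hcθpos : 0 < cθ := by
    rw [hcθdef]; exact Real.sqrt_pos.2 (by nlinarith [sq_nonneg ‖v - z‖])
  obtain ⟨gθ, hgθdef⟩ : ∃ g : X, g = (α / cθ) • (v - z) := ⟨_, rfl⟩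
  have hgθnorm : ‖gθ‖ ≤ α := by
    rw [hgθdef, norm_smul, Real.norm_eq_abs, abs_of_nonneg (div_pos hα hcθpos).le]
    have h1 : ‖v - z‖ ≤ cθ := by
      rw [hcθdef]; exact Real.le_sqrt_of_sq_le (by nlinarith [sq_nonneg δ0])
    rw [div_mul_eq_mul_div, div_le_iff₀ hcθpos]
    nlinarith [hα]
  have hΘder : ∀ ε : ℝ, 0 < ε → ∀ᶠ y in nhds v,
      |Θ y - Θ v - ⟪gθ, y - v⟫| ≤ ε * ‖y - v‖ := by
    intro ε hε
    have hsub : HasFDerivAt (fun y : X => y - z) (ContinuousLinearMap.id ℝ X) v :=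
      (hasFDerivAt_id v).sub_const z
    have hin := hsub.inner ℝ hsub
    have hN : HasFDerivAt (fun y : X => δ0^2 + ⟪y - z, y - z⟫)
        ((fderivInnerCLM ℝ ((fun y : X => y - z) v, (fun y : X => y - z) v)).comp
          ((ContinuousLinearMap.id ℝ X).prod (ContinuousLinearMap.id ℝ X))) v :=
      hin.const_add (δ0^2)
    have hNvpos : 0 < δ0^2 + (⟪v - z, v - z⟫ : ℝ) := by
      have := real_inner_self_nonneg (x := v - z)
      nlinarith
    have hsqrt := (Real.hasDerivAt_sqrt hNvpos.ne').comp_hasFDerivAt v hN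
    have hΘ' : HasFDerivAt Θ
        ((α * (1 / (2 * Real.sqrt (δ0^2 + ⟪v - z, v - z⟫)))) •
          ((fderivInnerCLM ℝ ((fun y : X => y - z) v, (fun y : X => y - z) v)).comp
          ((ContinuousLinearMap.id ℝ X).prod (ContinuousLinearMap.id ℝ X)))) v := by
      have heq : Θ = fun y : X => α * Real.sqrt (δ0^2 + ⟪y - z, y - z⟫) := by
        rw [hΘdef]
        funext y
        rw [real_inner_self_eq_norm_sq]
      rw [heq]
      have := hsqrt.const_mul α
      rw [smul_smul] at this
      exact this
    have hlo := hΘ'.isLittleO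
    have hev := (Asymptotics.isLittleO_iff.mp hlo) hε
    have hLval : ∀ u : X,
        ((α * (1 / (2 * Real.sqrt (δ0^2 + ⟪v - z, v - z⟫)))) •
          ((fderivInnerCLM ℝ ((fun y : X => y - z) v, (fun y : X => y - z) v)).comp
          ((ContinuousLinearMap.id ℝ X).prod (ContinuousLinearMap.id ℝ X)))) u
        = (⟪gθ, u⟫ : ℝ) := by
      intro u
      have hsR : Real.sqrt (δ0^2 + ⟪v - z, v - z⟫) = cθ := by
        rw [hcθdef, real_inner_self_eq_norm_sq]
      rw [hgθdef, real_inner_smul_left]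
      simp only [ContinuousLinearMap.coe_smul', Pi.smul_apply,
        ContinuousLinearMap.coe_comp', Function.comp_apply,
        ContinuousLinearMap.prod_apply, ContinuousLinearMap.coe_id', id_eq,
        fderivInnerCLM_apply, smul_eq_mul]
      rw [hsR, real_inner_comm u (v - z)]
      field_simp
      ring
    filter_upwards [hev] with y hy
    rw [hLval (y - v)] at hy
    rw [Real.norm_eq_abs] at hy
    exact hy
  -- the subgradient and its norm bound
  obtain ⟨ξ, hξdef⟩ : ∃ x : X, x = -gθ - (2:ℝ) • (Ainf • v - winf) := ⟨_, rfl⟩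
  have hAvw : ‖Ainf • v - winf‖ ≤ 2*Ainf*lam := by
    have hterm : ∀ n, ‖A n • v - W n‖ ≤ 2*Ainf*lam := by
      intro n
      have e1 : A n • v - W n = ∑ i ∈ Finset.range (n+1), t i • (v - xs i) := by
        rw [hW n, hAapp n, Finset.sum_smul, ← Finset.sum_sub_distrib]
        exact Finset.sum_congr rfl fun i _ => (smul_sub _ _ _).symm
      rw [e1]
      have hterm2 : ∀ i ∈ Finset.range (n+1), ‖t i • (v - xs i)‖ ≤ t i * (2*lam) := by
        intro i _
        rw [norm_smul, Real.norm_eq_abs, abs_of_pos (ht i)]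
        have h1 : ‖v - xs i‖ ≤ 2*lam := by
          have h2 := Rad i
          calc ‖v - xs i‖ = ‖(v - z) - (xs i - z)‖ := by abel_nf
            _ ≤ ‖v - z‖ + ‖xs i - z‖ := norm_sub_le _ _
            _ ≤ 2*lam := by linarith
        exact mul_le_mul_of_nonneg_left h1 (ht i).le
      calc ‖∑ i ∈ Finset.range (n+1), t i • (v - xs i)‖
          ≤ ∑ i ∈ Finset.range (n+1), ‖t i • (v - xs i)‖ := norm_sum_le _ _
        _ ≤ ∑ i ∈ Finset.range (n+1), t i * (2*lam) := Finset.sum_le_sum hterm2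
        _ = A n * (2*lam) := by rw [← Finset.sum_mul, hAapp]
        _ ≤ Ainf * (2*lam) := by
            apply mul_le_mul_of_nonneg_right (hAle n)
            nlinarith [hlam]
        _ = 2*Ainf*lam := by ring
    have htd : Tendsto (fun n => ‖A n • v - W n‖) atTop (nhds ‖Ainf • v - winf‖) :=
      ((hAtend.smul tendsto_const_nhds).sub hwinf).norm
    exact le_of_tendsto htd (Eventually.of_forall hterm)
  have hσlam : σ * lam ≤ γ/6 := by
    have h1 : (σ*lam)^2 ≤ (γ/6)^2 := by
      have e1 : (σ*lam)^2 = σ*(σ*lam^2) := by ring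
      rw [e1, hlamsq]
      have h2 : σ * (4*α*δ0) ≤ σ * (4*α*(γ*ρ/(24*α))) := by
        apply mul_le_mul_of_nonneg_left _ hσ.le
        nlinarith
      have h3 : σ * (4*α*(γ*ρ/(24*α))) = (γ/6)^2 := by
        rw [hσdef]; field_simp; ring
      linarith
    exact sq_le_imp_le (by positivity) h1
  have hξnorm : ‖ξ‖ ≤ α + γ := by
    have h1 : ‖ξ‖ ≤ ‖gθ‖ + 2*‖Ainf•v - winf‖ := by
      rw [hξdef]
      calc ‖-gθ - (2:ℝ) • (Ainf • v - winf)‖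
          ≤ ‖-gθ‖ + ‖(2:ℝ) • (Ainf • v - winf)‖ := norm_sub_le _ _
        _ = ‖gθ‖ + 2*‖Ainf•v - winf‖ := by
            rw [norm_neg, norm_smul, Real.norm_eq_abs]
            norm_num
    have h2 : 2*(2*Ainf*lam) ≤ γ := by
      rw [hAinfdef]
      have e1 : 2*(2*(σ*(4/3))*lam) = (16/3)*(σ*lam) := by ring
      rw [e1]
      nlinarith [hσlam, hγ]
    have h3 : ‖Ainf•v - winf‖ ≤ 2*Ainf*lam := hAvw
    linarith [hgθnorm]
  -- value decrease
  have hdecr : h v ≤ h z + γ := by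
    have hm := hmin z
    have h2 : ‖z - v‖ ≤ lam := by rw [norm_sub_rev]; exact hvz
    have hip : (⟪Ainf•v - winf, z - v⟫:ℝ) ≤ (2*Ainf*lam) * lam := by
      have h1 := real_inner_le_norm (Ainf•v - winf) (z - v)
      nlinarith [norm_nonneg (Ainf•v - winf), hAvw, norm_nonneg (z-v), hlam]
    have h3 : Ainf*‖z-v‖^2 ≤ Ainf*lam^2 :=
      mul_le_mul_of_nonneg_left
        (by nlinarith [h2, norm_nonneg (z-v), hlam.le] : ‖z-v‖^2 ≤ lam^2) hAinfpos.le
    have h4 : α * δ0 ≤ Θ v := hΘgeδ v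
    have key : 5*(Ainf*lam^2) ≤ γ := by
      have e1 : 5*(Ainf*lam^2) = (20/3)*(σ*lam^2) := by rw [hAinfdef]; ring
      rw [e1, hlamsq]
      have h6 : 28*(α*δ0) ≤ γ := by
        have e2 : (28:ℝ)*(α*(γ/(28*α))) = γ := by field_simp
        nlinarith [hα]
      nlinarith [hα.le, hδ0.le]
    have h5 : 2*(⟪Ainf•v - winf, z - v⟫:ℝ) ≤ 2*((2*Ainf*lam) * lam) := by linarith
    have e3 : 2*((2*Ainf*lam) * lam) + Ainf*lam^2 = 5*(Ainf*lam^2) := by ring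
    rw [hΘz] at hm
    nlinarith [hm, h5, h3, h4, key]
  refine ⟨v, ξ, hvz.trans hlamρ, hdecr, hξnorm, ?_⟩
  intro ε hε
  have hev1 := hΘder (ε/2) (by linarith)
  have hev2 : ∀ᶠ y in nhds v, Ainf * ‖y - v‖^2 ≤ (ε/2) * ‖y - v‖ := by
    have hball : ∀ᶠ y in nhds v, ‖y - v‖ < ε/(2*(Ainf+1)) := by
      have hrpos : 0 < ε/(2*(Ainf+1)) := by
        apply div_pos hε
        nlinarith [hAinfpos]
      filter_upwards [Metric.ball_mem_nhds v hrpos] with y hy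
      rwa [mem_ball, dist_eq_norm] at hy
    filter_upwards [hball] with y hy
    have hn := norm_nonneg (y - v)
    have hd : 0 < 2*(Ainf+1) := by nlinarith [hAinfpos]
    have h1 : ‖y - v‖ * (2*(Ainf+1)) < ε := (lt_div_iff₀ hd).mp hy
    nlinarith [hAinfpos, hn, h1, sq_nonneg ‖y - v‖]
  filter_upwards [hev1, hev2] with y h1 h2
  have hm := hmin y
  have h1' : Θ y - Θ v - ⟪gθ, y-v⟫ ≤ (ε/2) * ‖y - v‖ := le_of_abs_le h1
  have hξv : (⟪ξ, y-v⟫:ℝ) = -⟪gθ, y-v⟫ - 2*⟪Ainf•v - winf, y-v⟫ := by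
    rw [hξdef, inner_sub_left, inner_neg_left, real_inner_smul_left]
  linarith [hm, h1', h2, hξv]


lemma phi_mono {η : ℝ} {φ φ' : ℝ → ℝ}
    (hφc : ContinuousOn φ (Ico 0 η))
    (hφd : ∀ s ∈ Ioo 0 η, HasDerivAt φ (φ' s) s)
    (hφ'pos : ∀ s ∈ Ioo 0 η, 0 < φ' s) :
    ∀ a b, 0 ≤ a → a < b → b < η → φ a < φ b := by
  intro a b ha hab hbη
  obtain ⟨cc, hcc, hceq⟩ := exists_hasDerivAt_eq_slope φ φ' hab
    (hφc.mono (fun w hw => ⟨le_trans ha hw.1, lt_of_le_of_lt hw.2 hbη⟩))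
    (fun w hw => hφd w ⟨lt_of_le_of_lt ha hw.1, lt_trans hw.2 hbη⟩)
  have h1 : 0 < φ' cc := hφ'pos cc ⟨lt_of_le_of_lt ha hcc.1, lt_trans hcc.2 hbη⟩
  rw [hceq] at h1
  have hba : 0 < b - a := by linarith
  have h2 := mul_pos h1 hba
  rw [div_mul_cancel₀ _ hba.ne'] at h2
  linarith

lemma phi_tangent {η : ℝ} {φ φ' : ℝ → ℝ}
    (hφconc : ConcaveOn ℝ (Ico 0 η) φ)
    (hφd : ∀ s ∈ Ioo 0 η, HasDerivAt φ (φ' s) s) :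
    ∀ s u, s ∈ Ioo 0 η → u ∈ Ico 0 η → φ u ≤ φ s + φ' s * (u - s) := by
  intro s u hs hu
  have hsI : s ∈ Ico 0 η := ⟨hs.1.le, hs.2⟩
  rcases lt_trichotomy u s with hus | heq | hsu
  · -- u < s
    have htd : Tendsto (slope φ s) (nhdsWithin s (Iio s)) (nhds (φ' s)) :=
      (hasDerivAt_iff_tendsto_slope.mp (hφd s hs)).mono_left
        (nhdsWithin_mono s (fun w hw => ne_of_lt hw))
    have hev : ∀ᶠ w in nhdsWithin s (Iio s), slope φ s w ≤ slope φ s u := by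
      filter_upwards [Ioo_mem_nhdsLT_of_mem (⟨hus, le_refl s⟩ : s ∈ Ioc u s)] with w hw
      have hsu0 : (0:ℝ) < s - u := by linarith
      have hsw0 : (0:ℝ) < s - w := by have := hw.2; linarith
      have hpt : (s-w)/(s-u) * u + (w-u)/(s-u) * s = w := by
        field_simp
        ring
      have ha' : (0:ℝ) ≤ (s-w)/(s-u) := by positivity
      have hb' : (0:ℝ) ≤ (w-u)/(s-u) := by
        apply div_nonneg _ hsu0.le; have := hw.1; linarith
      have hab' : (s-w)/(s-u) + (w-u)/(s-u) = 1 := by field_simp; ring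
      have hcomb := hφconc.2 hu hsI ha' hb' hab'
      rw [smul_eq_mul, smul_eq_mul, smul_eq_mul, smul_eq_mul, hpt] at hcomb
      have hcomb' : (s-w)*φ u + (w-u)*φ s ≤ φ w * (s-u) := by
        have h9 := mul_le_mul_of_nonneg_right hcomb hsu0.le
        have c1 : ((s-w)/(s-u)*φ u + (w-u)/(s-u)*φ s)*(s-u) = (s-w)*φ u + (w-u)*φ s := by
          field_simp
        rw [c1] at h9
        exact h9
      have e1 : slope φ s w = (φ s - φ w)/(s-w) := by
        rw [slope_def_field, div_eq_div_iff (by linarith) (by linarith : s - w ≠ 0)]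
        ring
      have e2 : slope φ s u = (φ s - φ u)/(s-u) := by
        rw [slope_def_field, div_eq_div_iff (by linarith) (by linarith : s - u ≠ 0)]
        ring
      rw [e1, e2, div_le_div_iff₀ hsw0 hsu0]
      nlinarith [hcomb']
    have hle : φ' s ≤ slope φ s u := le_of_tendsto htd hev
    rw [slope_def_field] at hle
    have hsu0 : (0:ℝ) < s - u := by linarith
    have h9 := mul_le_mul_of_nonneg_right hle hsu0.le
    have e3 : (φ u - φ s)/(u-s)*(s-u) = φ s - φ u := by
      have hne : u - s ≠ 0 := by linarith
      field_simp
      ring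
    rw [e3] at h9
    linarith
  · rw [heq]; simp
  · -- s < u
    have htd : Tendsto (slope φ s) (nhdsWithin s (Ioi s)) (nhds (φ' s)) :=
      (hasDerivAt_iff_tendsto_slope.mp (hφd s hs)).mono_left
        (nhdsWithin_mono s (fun w hw => ne_of_gt hw))
    have hev : ∀ᶠ w in nhdsWithin s (Ioi s), slope φ s u ≤ slope φ s w := by
      filter_upwards [Ioo_mem_nhdsGT_of_mem (⟨le_refl s, hsu⟩ : s ∈ Ico s u)] with w hw
      have hus0 : (0:ℝ) < u - s := by linarith
      have hws0 : (0:ℝ) < w - s := by have := hw.1; linarith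
      have hpt : (u-w)/(u-s) * s + (w-s)/(u-s) * u = w := by
        field_simp
        ring
      have ha' : (0:ℝ) ≤ (u-w)/(u-s) := by
        apply div_nonneg _ hus0.le; have := hw.2; linarith
      have hb' : (0:ℝ) ≤ (w-s)/(u-s) := by positivity
      have hab' : (u-w)/(u-s) + (w-s)/(u-s) = 1 := by field_simp; ring
      have hcomb := hφconc.2 hsI hu ha' hb' hab'
      rw [smul_eq_mul, smul_eq_mul, smul_eq_mul, smul_eq_mul, hpt] at hcomb
      have hcomb' : (u-w)*φ s + (w-s)*φ u ≤ φ w * (u-s) := by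
        have h9 := mul_le_mul_of_nonneg_right hcomb hus0.le
        have c1 : ((u-w)/(u-s)*φ s + (w-s)/(u-s)*φ u)*(u-s) = (u-w)*φ s + (w-s)*φ u := by
          field_simp
        rw [c1] at h9
        exact h9
      rw [slope_def_field, slope_def_field, div_le_div_iff₀ hus0 hws0]
      nlinarith [hcomb']
    have hle : slope φ s u ≤ φ' s := ge_of_tendsto htd hev
    rw [slope_def_field] at hle
    have hus0 : (0:ℝ) < u - s := by linarith
    have h9 := mul_le_mul_of_nonneg_right hle hus0.le
    rw [div_mul_cancel₀ _ hus0.ne'] at h9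
    linarith

set_option maxHeartbeats 1000000 in
/-- KL condition (w.r.t. the Fréchet subdifferential) implies a growth error bound on a
possibly smaller set, for proper weakly lower semicontinuous (possibly nonconvex) functions
(Theorem 2.4 / thm2). Weak lsc is encoded sequentially via weak convergence. -/
theorem stmt_10
    {X : Type*} [NormedAddCommGroup X] [InnerProductSpace ℝ X] [CompleteSpace X]
    (f : X → EReal)
    (hproper : (∀ x, f x ≠ ⊥) ∧ ∃ x, f x ≠ ⊤)
    (hwlsc : ∀ (z : X) (u : ℕ → X),
      (∀ y : X, Tendsto (fun n => (inner ℝ (u n) y : ℝ)) atTop (nhds (inner ℝ z y : ℝ))) →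
      f z ≤ liminf (fun n => f (u n)) atTop)
    (xb : X) (hxb : f xb ≠ ⊤)
    (r η : ℝ) (hr : 0 < r) (hη : 0 < η)
    (φ φ' : ℝ → ℝ)
    (hφc : ContinuousOn φ (Ico 0 η)) (hφ0 : φ 0 = 0)
    (hφconc : ConcaveOn ℝ (Ico 0 η) φ)
    (hφd : ∀ s ∈ Ioo 0 η, HasDerivAt φ (φ' s) s)
    (hφ'c : ContinuousOn φ' (Ioo 0 η))
    (hφ'pos : ∀ s ∈ Ioo 0 η, 0 < φ' s)
    (hKL : ∀ x ∈ ball xb r, f xb < f x → f x < f xb + (η : EReal) →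
      ∀ ξ ∈ FrechetSubdiff f x, 1 ≤ φ' ((f x).toReal - (f xb).toReal) * ‖ξ‖)
    (S : Set X) (hS : S = {x | f x ≤ f xb}) :
    ∃ rt ηt : ℝ, 0 < rt ∧ rt ≤ r ∧ 0 < ηt ∧ ηt ≤ η ∧
      ∀ x ∈ ball xb rt, f xb ≤ f x → f x < f xb + (ηt : EReal) →
        infDist x S ≤ 2 * φ ((f x).toReal - (f xb).toReal) := by
  classical
  obtain ⟨hbot, -⟩ := hproper
  have hmono := phi_mono hφc hφd hφ'pos
  have htang := phi_tangent hφconc hφd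
  have hmono' : ∀ a b, 0 ≤ a → a ≤ b → b < η → φ a ≤ φ b := by
    intro a b ha hab hbη
    rcases eq_or_lt_of_le hab with rfl | hlt
    · exact le_refl _
    · exact (hmono a b ha hlt hbη).le
  set fb : ℝ := (f xb).toReal with hfbdef
  have hfxb : f xb = (fb : EReal) := (EReal.coe_toReal hxb (hbot xb)).symm
  -- find η1 with φ small on [0, η1]
  have hφ0c : ContinuousWithinAt φ (Ico 0 η) 0 := hφc 0 ⟨le_refl 0, hη⟩
  have hev : ∀ᶠ u in nhdsWithin 0 (Ico 0 η), φ u < r/16 :=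
    hφ0c.eventually_lt_const (by rw [hφ0]; positivity)
  obtain ⟨δ, hδpos, hδsub⟩ := Metric.mem_nhdsWithin_iff.mp hev
  set ηt : ℝ := min (δ/2) (η/2) with hηtdef
  have hηtpos : 0 < ηt := lt_min (by positivity) (by positivity)
  have hηtη : ηt < η := lt_of_le_of_lt (min_le_right _ _) (by linarith)
  have hφsmall : ∀ u : ℝ, 0 ≤ u → u ≤ ηt → φ u < r/16 := by
    intro u hu0 huη
    apply hδsub
    constructor
    · rw [mem_ball, dist_zero_right, Real.norm_eq_abs, abs_of_nonneg hu0]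
      have : ηt ≤ δ/2 := min_le_left _ _
      linarith
    · exact ⟨hu0, by linarith⟩
  set c : ℝ := (ηt + η)/2 with hcdef
  have hc1 : ηt < c := by rw [hcdef]; linarith
  have hc2 : c < η := by rw [hcdef]; linarith
  have hc0 : 0 < c := lt_trans hηtpos hc1
  refine ⟨r/4, ηt, by positivity, by linarith, hηtpos, hηtη.le, ?_⟩
  intro x hx hfle hflt
  -- the function m and h
  set K : EReal := ((fb + c : ℝ) : EReal) with hKdef
  set m : X → ℝ := fun y => max ((min (f y) K).toReal - fb) 0 with hmdef
  set h : X → ℝ := fun y => φ (m y) with hhdef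
  have hKbot : K ≠ ⊥ := by rw [hKdef]; exact EReal.coe_ne_bot _
  have hKtop : K ≠ ⊤ := by rw [hKdef]; exact EReal.coe_ne_top _
  have hminbot : ∀ y, min (f y) K ≠ ⊥ := by
    intro y
    rcases min_cases (f y) K with h' | h'
    · rw [h'.1]; exact hbot y
    · rw [h'.1]; exact hKbot
  have hmintop : ∀ y, min (f y) K ≠ ⊤ :=
    fun y => ne_top_of_le_ne_top hKtop (min_le_right _ _)
  have hm0 : ∀ y, 0 ≤ m y := fun y => le_max_right _ _
  have hmc : ∀ y, m y ≤ c := by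
    intro y
    simp only [hmdef]
    apply max_le _ hc0.le
    have h2 : min (f y) K ≤ K := min_le_right _ _
    have h3 := EReal.toReal_le_toReal h2 (hminbot y) hKtop
    rw [hKdef, EReal.toReal_coe] at h3
    linarith
  have hmIco : ∀ y, m y ∈ Ico 0 η := fun y => ⟨hm0 y, lt_of_le_of_lt (hmc y) hc2⟩
  have hφm0 : ∀ y, 0 ≤ h y := by
    intro y
    have h1 := hmono' 0 (m y) le_rfl (hm0 y) (lt_of_le_of_lt (hmc y) hc2)
    rw [hφ0] at h1
    exact h1
  -- value of m from an explicit representation of f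
  have hval : ∀ (y : X) (u : ℝ), f y = ((fb + u : ℝ) : EReal) → u ≤ c → m y = max u 0 := by
    intro y u hfy huc
    simp only [hmdef]
    rw [hfy, hKdef]
    rw [min_eq_left (by exact_mod_cast (by linarith : fb + u ≤ fb + c))]
    rw [EReal.toReal_coe]
    congr 1
    ring
  -- the value t at x
  set t : ℝ := (f x).toReal - fb with htdef
  have hrhs : f xb + (ηt : EReal) = ((fb + ηt : ℝ) : EReal) := by
    rw [hfxb, ← EReal.coe_add]
  have hfxtop : f x ≠ ⊤ := by
    intro hh
    rw [hh, hrhs] at hflt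
    exact not_top_lt hflt
  have hfx : f x = ((fb + t : ℝ) : EReal) := by
    have e1 : ((fb + t : ℝ) : EReal) = (((f x).toReal : ℝ) : EReal) := by
      rw [htdef]; norm_num
    rw [e1]
    exact (EReal.coe_toReal hfxtop (hbot x)).symm
  have ht0 : 0 ≤ t := by
    rw [hfxb, hfx] at hfle
    have := EReal.coe_le_coe_iff.mp hfle
    linarith
  have htlt : t < ηt := by
    rw [hfx, hrhs] at hflt
    have := EReal.coe_lt_coe_iff.mp hflt
    linarith
  rcases eq_or_lt_of_le ht0 with ht0' | htpos
  · -- t = 0 : x itself is in S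
    have hxS : x ∈ S := by
      rw [hS]
      show f x ≤ f xb
      rw [hfx, hfxb, ← ht0']
      norm_num
    have he : infDist x S = 0 := infDist_zero_of_mem hxS
    rw [he, ← ht0', hφ0]
    norm_num
  · -- t > 0 : the main case
    have hseq : SeqLSCa h := by
      intro y u hu b hb
      by_contra hcon
      push_neg at hcon
      have hcon' : b < φ (m y) := hcon
      have hbnn : 0 ≤ b := by
        obtain ⟨n, hn⟩ := hb.exists
        exact le_trans (hφm0 (u n)) hn
      have hmy : 0 < m y := by
        rcases eq_or_lt_of_le (hm0 y) with h0 | h0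
        · exfalso
          rw [← h0, hφ0] at hcon'
          linarith
        · exact h0
      have hccc : ContinuousWithinAt φ (Ico 0 η) (m y) := hφc (m y) (hmIco y)
      have hev2 : ∀ᶠ w in nhdsWithin (m y) (Ico 0 η), b < φ w :=
        hccc (Ioi_mem_nhds hcon')
      obtain ⟨δ2, hδ2pos, hδ2sub⟩ := Metric.mem_nhdsWithin_iff.mp hev2
      set a' : ℝ := m y - min (δ2/2) (m y / 2) with ha'def
      have hminpos : 0 < min (δ2/2) (m y / 2) := lt_min (by positivity) (by linarith)
      have ha'1 : 0 < a' := by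
        rw [ha'def]
        have := min_le_right (δ2/2) (m y / 2)
        linarith
      have ha'2 : a' < m y := by rw [ha'def]; linarith
      have ha'η : a' < η := lt_of_lt_of_le ha'2 (le_of_lt (lt_of_le_of_lt (hmc y) hc2))
      have ha'mem : b < φ a' := by
        apply hδ2sub
        constructor
        · rw [mem_ball, Real.dist_eq, ha'def]
          rw [abs_of_nonpos (by linarith [hminpos] : m y - min (δ2/2) (m y/2) - m y ≤ 0)]
          have := min_le_left (δ2/2) (m y / 2)
          linarith
        · exact ⟨ha'1.le, ha'η⟩
      have hev3 : ∀ᶠ n in atTop, f (u n) ≤ ((fb + a' : ℝ) : EReal) := by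
        filter_upwards [hb] with n hn
        have hmlt : m (u n) < a' := by
          by_contra hge
          push_neg at hge
          have h1 := hmono' a' (m (u n)) ha'1.le hge (lt_of_le_of_lt (hmc _) hc2)
          have h2 : h (u n) = φ (m (u n)) := rfl
          rw [h2] at hn
          linarith
        have h1 : (min (f (u n)) K).toReal - fb < a' :=
          lt_of_le_of_lt (le_max_left _ _) hmlt
        have h2 : min (f (u n)) K ≤ ((fb + a' : ℝ) : EReal) := by
          have h3 : min (f (u n)) K = (((min (f (u n)) K).toReal : ℝ) : EReal) :=
            (EReal.coe_toReal (hmintop _) (hminbot _)).symm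
          rw [h3]
          exact_mod_cast (by linarith : (min (f (u n)) K).toReal ≤ fb + a')
        have ha'c : a' < c := lt_of_lt_of_le ha'2 (hmc y)
        rcases le_or_gt K (f (u n)) with h4 | h4
        · exfalso
          rw [min_eq_right h4, hKdef] at h2
          have := EReal.coe_le_coe_iff.mp h2
          linarith
        · rwa [min_eq_left h4.le] at h2
      have hlim : f y ≤ ((fb + a' : ℝ) : EReal) := by
        refine le_trans (hwlsc y u ?_) (liminf_le_of_frequently_le hev3.frequently)
        intro w
        exact Filter.Tendsto.inner hu tendsto_const_nhds
      have hmya : m y ≤ a' := by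
        have h5 : min (f y) K ≤ ((fb + a' : ℝ) : EReal) := le_trans (min_le_left _ _) hlim
        have h6 := EReal.toReal_le_toReal h5 (hminbot y) (EReal.coe_ne_top _)
        rw [EReal.toReal_coe] at h6
        simp only [hmdef]
        exact max_le (by linarith) ha'1.le
      linarith
    -- value at x
    have hmx : m x = t := by
      rw [hval x t hfx (by linarith : t ≤ c)]
      exact max_eq_left ht0
    have hhx : h x = φ t := by
      have : h x = φ (m x) := rfl
      rw [this, hmx]
    have hφtpos : 0 < φ t := by
      have := hmono 0 t le_rfl htpos (by linarith)
      rwa [hφ0] at this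
    have hφtsmall : φ t < r/16 := hφsmall t ht0 htlt.le
    -- Ekeland step
    obtain ⟨z, hz1, hz2, hz3⟩ := ekeland_vp h hφm0 hseq x (by norm_num : (0:ℝ) < 3/5)
    rw [hhx] at hz1 hz2
    have hzx : ‖z - x‖ ≤ (5/3) * φ t := by
      have := hφm0 z
      linarith
    rcases eq_or_lt_of_le (hφm0 z) with hz0 | hz0
    · -- h z = 0 : z ∈ S and we are done
      have hmz : m z = 0 := by
        by_contra hne
        have h0 : 0 < m z := lt_of_le_of_ne (hm0 z) (Ne.symm hne)
        have h1 := hmono 0 (m z) le_rfl h0 (lt_of_le_of_lt (hmc z) hc2)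
        rw [hφ0] at h1
        have h2 : h z = φ (m z) := rfl
        rw [h2] at hz0
        linarith
      have hzS : z ∈ S := by
        rw [hS]
        show f z ≤ f xb
        have h1 : (min (f z) K).toReal - fb ≤ 0 := by
          by_contra hgt
          push_neg at hgt
          have h2 : 0 < m z := lt_of_lt_of_le hgt (le_max_left _ _)
          linarith
        have h2 : min (f z) K ≤ (fb : EReal) := by
          have h3 : min (f z) K = (((min (f z) K).toReal : ℝ) : EReal) :=
            (EReal.coe_toReal (hmintop z) (hminbot z)).symm
          rw [h3]
          exact_mod_cast (by linarith)
        rw [hfxb]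
        rcases le_or_gt K (f z) with h4 | h4
        · exfalso
          rw [min_eq_right h4, hKdef] at h2
          have := EReal.coe_le_coe_iff.mp h2
          linarith
        · rwa [min_eq_left h4.le] at h2
      have hd : infDist x S ≤ dist x z := infDist_le_dist_of_mem hzS
      rw [dist_eq_norm, norm_sub_rev] at hd
      linarith
    · -- h z > 0 : contradiction with the KL inequality
      exfalso
      have hφcφt : φ t < φ c := hmono t c ht0 (lt_trans htlt hc1) hc2
      set γ' : ℝ := min (1/5) ((φ c - φ t)/2) with hγ'def
      have hγ'pos : 0 < γ' := lt_min (by norm_num) (by linarith)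
      set ρ' : ℝ := min (r/8) (h z) with hρ'def
      have hρ'pos : 0 < ρ' := lt_min (by positivity) hz0
      obtain ⟨v, ξ, hv1, hv2, hv3, hv4⟩ := smoothVP h hφm0 hseq z
        (by norm_num : (0:ℝ) < 3/5) hρ'pos hγ'pos hz3
      have hρ'z : ρ' ≤ h z := min_le_right _ _
      have hρ'r : ρ' ≤ r/8 := min_le_left _ _
      have hvpos : 0 < h v := by
        have h5 := hz3 v
        have h6 : (3:ℝ)/5 * ‖v - z‖ ≤ (3:ℝ)/5 * ρ' := by linarith [hv1]
        linarith
      have hvc : h v < φ c := by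
        have h7 : γ' ≤ (φ c - φ t)/2 := min_le_right _ _
        linarith
      set s : ℝ := m v with hsdef
      have hhv : h v = φ s := rfl
      have hs0 : 0 < s := by
        rcases eq_or_lt_of_le (hm0 v) with h9 | h9
        · exfalso
          rw [hhv, hsdef, ← h9, hφ0] at hvpos
          linarith
        · exact h9
      have hsc : s < c := by
        rcases eq_or_lt_of_le (hmc v) with h9 | h9
        · exfalso
          rw [hhv, hsdef, h9] at hvc
          exact lt_irrefl _ hvc
        · exact h9
      have hsη : s < η := lt_trans hsc hc2
      have hfv : f v = ((fb + s : ℝ) : EReal) := by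
        have h10 : (min (f v) K).toReal - fb = s := by
          rcases le_or_gt ((min (f v) K).toReal - fb) 0 with h11 | h11
          · exfalso
            have h12 : m v = 0 := by simp only [hmdef]; exact max_eq_right h11
            rw [hsdef] at hs0
            linarith
          · have h12 : m v = (min (f v) K).toReal - fb := by
              simp only [hmdef]; exact max_eq_left h11.le
            rw [hsdef, h12]
        have h12 : min (f v) K = ((fb + s : ℝ) : EReal) := by
          have h13 : min (f v) K = (((min (f v) K).toReal : ℝ) : EReal) :=
            (EReal.coe_toReal (hmintop v) (hminbot v)).symm
          rw [h13]
          exact_mod_cast (by linarith : (min (f v) K).toReal = fb + s)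
        rcases le_or_gt K (f v) with h14 | h14
        · exfalso
          rw [min_eq_right h14, hKdef] at h12
          have := EReal.coe_eq_coe_iff.mp h12
          linarith
        · rwa [min_eq_left h14.le] at h12
      have hvball : v ∈ ball xb r := by
        rw [mem_ball, dist_eq_norm]
        have h15 : ‖v - xb‖ ≤ ‖v - z‖ + ‖z - x‖ + ‖x - xb‖ := by
          calc ‖v - xb‖ = ‖(v - z) + ((z - x) + (x - xb))‖ := by
                congr 1; abel
            _ ≤ ‖v - z‖ + ‖(z - x) + (x - xb)‖ := norm_add_le _ _
            _ ≤ ‖v - z‖ + (‖z - x‖ + ‖x - xb‖) := by linarith [norm_add_le (z-x) (x-xb)]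
            _ = ‖v - z‖ + ‖z - x‖ + ‖x - xb‖ := by ring
        have hxxb : ‖x - xb‖ < r/4 := by rw [← dist_eq_norm]; exact mem_ball.mp hx
        linarith [hv1, hzx, hφtsmall]
      have hfxblt : f xb < f v := by
        rw [hfxb, hfv]
        exact_mod_cast (by linarith : fb < fb + s)
      have hfvlt : f v < f xb + (η : EReal) := by
        rw [hfxb, hfv, ← EReal.coe_add]
        exact_mod_cast (by linarith : fb + s < fb + η)
      have harg : (f v).toReal - (f xb).toReal = s := by
        rw [hfv, EReal.toReal_coe, ← hfbdef]
        ring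
      have hφ's := hφ'pos s ⟨hs0, hsη⟩
      set ζ : X := (φ' s)⁻¹ • ξ with hζdef
      have hζmem : ζ ∈ FrechetSubdiff f v := by
        constructor
        · rw [hfv]; exact EReal.coe_ne_top _
        · intro ε hε
          have hεφ : 0 < ε * φ' s := mul_pos hε hφ's
          have hev4 := hv4 (ε * φ' s) hεφ
          have hden : (0:ℝ) < 2*(‖ξ‖ + ε*φ' s + 1) := by
            have h16a := norm_nonneg ξ
            linarith [hεφ]
          have hβ : (0:ℝ) < h v / (2*(‖ξ‖ + ε*φ' s + 1)) := div_pos hvpos hden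
          have hev5 : ∀ᶠ y in nhds v, ‖y - v‖ < h v / (2*(‖ξ‖ + ε*φ' s + 1)) := by
            filter_upwards [Metric.ball_mem_nhds v hβ] with y hy
            rwa [mem_ball, dist_eq_norm] at hy
          have hcomb : ∀ᶠ y in nhdsWithin v {v}ᶜ,
              (h v + (inner ℝ ξ (y - v) : ℝ) - (ε*φ' s) * ‖y - v‖ ≤ h y)
              ∧ ‖y - v‖ < h v / (2*(‖ξ‖ + ε*φ' s + 1)) :=
            eventually_nhdsWithin_of_eventually_nhds (hev4.and hev5)
          filter_upwards [hcomb] with y hy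
          obtain ⟨hy1, hy2⟩ := hy
          have hξy : -(‖ξ‖*‖y - v‖) ≤ (inner ℝ ξ (y - v) : ℝ) := by
            have h16 := abs_real_inner_le_norm ξ (y - v)
            have h17 := neg_abs_le ((inner ℝ ξ (y - v) : ℝ))
            linarith
          have hypos : 0 < h y := by
            have h17 : ‖y - v‖ * (2*(‖ξ‖ + ε*φ' s + 1)) < h v := (lt_div_iff₀ hden).mp hy2
            linarith [hy1, hξy, norm_nonneg (y - v), hvpos]
          rcases eq_or_ne (f y) ⊤ with hytop | hytop
          · rw [hytop, hfv, ← EReal.coe_add]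
            exact le_top
          · have hfy : f y = (((f y).toReal : ℝ) : EReal) :=
              (EReal.coe_toReal hytop (hbot y)).symm
            have hmy2 : 0 < m y := by
              rcases eq_or_lt_of_le (hm0 y) with h19 | h19
              · exfalso
                have h2 : h y = φ (m y) := rfl
                rw [h2, ← h19, hφ0] at hypos
                linarith
              · exact h19
            have hmyuy : m y ≤ (f y).toReal - fb := by
              have h20 : min (f y) K ≤ f y := min_le_left _ _
              have h21 := EReal.toReal_le_toReal h20 (hminbot y) hytop
              have h22 : m y = (min (f y) K).toReal - fb := by
                rcases le_or_gt ((min (f y) K).toReal - fb) 0 with h23 | h23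
                · exfalso
                  have h24 : m y = 0 := by simp only [hmdef]; exact max_eq_right h23
                  linarith
                · simp only [hmdef]; exact max_eq_left h23.le
              rw [h22]
              linarith
            have htan := htang s (m y) ⟨hs0, hsη⟩ (hmIco y)
            have hhy : h y = φ (m y) := rfl
            have h24 : (inner ℝ ξ (y-v) : ℝ) - (ε*φ' s)*‖y-v‖ ≤ φ' s * (m y - s) := by
              rw [hhy] at hy1
              rw [hhv] at hy1
              linarith
            have h25 : (inner ℝ ζ (y-v) : ℝ) - ε*‖y-v‖ ≤ m y - s := by
              have hζy : (inner ℝ ζ (y-v) : ℝ) = (φ' s)⁻¹ * (inner ℝ ξ (y-v) : ℝ) :=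
                real_inner_smul_left _ _ _
              rw [hζy]
              have h27 := mul_le_mul_of_nonneg_left h24 (inv_nonneg.mpr hφ's.le)
              have e28 : (φ' s)⁻¹ * (φ' s * (m y - s)) = m y - s := by
                field_simp
              have e29 : (φ' s)⁻¹ * ((inner ℝ ξ (y-v):ℝ) - (ε*φ' s)*‖y-v‖)
                  = (φ' s)⁻¹ * (inner ℝ ξ (y-v):ℝ) - ε*‖y-v‖ := by
                field_simp
              rw [e28, e29] at h27
              exact h27
            have h30 : fb + s + ((inner ℝ ζ (y-v):ℝ) - ε*‖y-v‖) ≤ (f y).toReal := by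
              linarith
            rw [hfv, hfy, ← EReal.coe_add]
            exact_mod_cast h30
      have hKLv := hKL v hvball hfxblt hfvlt ζ hζmem
      rw [harg] at hKLv
      have hζnorm : ‖ζ‖ = ‖ξ‖ / φ' s := by
        rw [hζdef, norm_smul, Real.norm_eq_abs, abs_of_pos (inv_pos.mpr hφ's)]
        rw [inv_mul_eq_div]
      rw [hζnorm] at hKLv
      have h31 : φ' s * (‖ξ‖ / φ' s) = ‖ξ‖ := by field_simp
      rw [h31] at hKLv
      have h33 : γ' ≤ 1/5 := min_le_left _ _
      linarith [hv3]
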